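/- For (a,b,c) ∈ ℂ³, let A(a,b,c) be the 8×8 complex skew-symmetric matrix (indices 0–7) whose strictly upper-triangular entries are A₀₁ = c, A₀₃ = a, A₀₇ = a, A₁₃ = b, A₁₇ = b, A₂₃ = a, A₂₄ = b, A₃₄ = c, A₅₆ = a, A₅₇ = b, A₆₇ = c, with all other strictly upper-triangular entries equal to 0 and A_{j,i} = −A_{i,j}. Then for every (a,b,c) ≠ (0,0,0) the matrix A(a,b,c) has rank exactly 6. In particular the span of A(1,0,0), A(0,1,0), A(0,0,1) is a 3-dimensional space of skew-symmetric 8×8 matrices of constant rank 6. -/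

import Mathlib

set_option maxRecDepth 8000
set_option maxHeartbeats 1600000

open Matrix

/-- The strictly upper-triangular part of the matrix of Statement 18:
`A₀₁ = c, A₀₃ = a, A₀₇ = a, A₁₃ = b, A₁₇ = b, A₂₃ = a, A₂₄ = b, A₃₄ = c,
A₅₆ = a, A₅₇ = b, A₆₇ = c`. -/
def upperPart (a b c : ℂ) : Matrix (Fin 8) (Fin 8) ℂ :=
  Matrix.of !![0, c, 0, a, 0, 0, 0, a;
               0, 0, 0, b, 0, 0, 0, b;
               0, 0, 0, a, b, 0, 0, 0;
               0, 0, 0, 0, c, 0, 0, 0;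
               0, 0, 0, 0, 0, 0, 0, 0;
               0, 0, 0, 0, 0, 0, a, b;
               0, 0, 0, 0, 0, 0, 0, c;
               0, 0, 0, 0, 0, 0, 0, 0]

/-- The skew-symmetric matrix `A(a,b,c)` of Statement 18. -/
def skewA (a b c : ℂ) : Matrix (Fin 8) (Fin 8) ℂ :=
  upperPart a b c - (upperPart a b c)ᵀ

@[simp] lemma of_mat_apply (M : Matrix (Fin 8) (Fin 8) ℂ) (i j : Fin 8) :
    (Matrix.of M : Matrix (Fin 8) (Fin 8) ℂ) i j = M i j := rfl

private lemma fin3_2 : (2 : Fin 3) = Fin.succ 1 := rfl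
private lemma fin4_2 : (2 : Fin 4) = Fin.succ 1 := rfl
private lemma fin4_3 : (3 : Fin 4) = Fin.succ 2 := rfl
private lemma fin5_2 : (2 : Fin 5) = Fin.succ 1 := rfl
private lemma fin5_3 : (3 : Fin 5) = Fin.succ 2 := rfl
private lemma fin5_4 : (4 : Fin 5) = Fin.succ 3 := rfl
private lemma fin6_2 : (2 : Fin 6) = Fin.succ 1 := rfl
private lemma fin6_3 : (3 : Fin 6) = Fin.succ 2 := rfl
private lemma fin6_4 : (4 : Fin 6) = Fin.succ 3 := rfl
private lemma fin6_5 : (5 : Fin 6) = Fin.succ 4 := rfl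
private lemma fin7_2 : (2 : Fin 7) = Fin.succ 1 := rfl
private lemma fin7_3 : (3 : Fin 7) = Fin.succ 2 := rfl
private lemma fin7_4 : (4 : Fin 7) = Fin.succ 3 := rfl
private lemma fin7_5 : (5 : Fin 7) = Fin.succ 4 := rfl
private lemma fin7_6 : (6 : Fin 7) = Fin.succ 5 := rfl
private lemma fin8_2 : (2 : Fin 8) = Fin.succ 1 := rfl
private lemma fin8_3 : (3 : Fin 8) = Fin.succ 2 := rfl
private lemma fin8_4 : (4 : Fin 8) = Fin.succ 3 := rfl
private lemma fin8_5 : (5 : Fin 8) = Fin.succ 4 := rfl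
private lemma fin8_6 : (6 : Fin 8) = Fin.succ 5 := rfl
private lemma fin8_7 : (7 : Fin 8) = Fin.succ 6 := rfl

private lemma cs2_0 : Fin.castSucc (0 : Fin 2) = (0 : Fin 3) := rfl
private lemma cs2_1 : Fin.castSucc (1 : Fin 2) = (1 : Fin 3) := rfl
private lemma cs3_0 : Fin.castSucc (0 : Fin 3) = (0 : Fin 4) := rfl
private lemma cs3_1 : Fin.castSucc (1 : Fin 3) = (1 : Fin 4) := rfl
private lemma cs3_2 : Fin.castSucc (2 : Fin 3) = (2 : Fin 4) := rfl
private lemma cs4_0 : Fin.castSucc (0 : Fin 4) = (0 : Fin 5) := rfl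
private lemma cs4_1 : Fin.castSucc (1 : Fin 4) = (1 : Fin 5) := rfl
private lemma cs4_2 : Fin.castSucc (2 : Fin 4) = (2 : Fin 5) := rfl
private lemma cs4_3 : Fin.castSucc (3 : Fin 4) = (3 : Fin 5) := rfl
private lemma cs5_0 : Fin.castSucc (0 : Fin 5) = (0 : Fin 6) := rfl
private lemma cs5_1 : Fin.castSucc (1 : Fin 5) = (1 : Fin 6) := rfl
private lemma cs5_2 : Fin.castSucc (2 : Fin 5) = (2 : Fin 6) := rfl
private lemma cs5_3 : Fin.castSucc (3 : Fin 5) = (3 : Fin 6) := rfl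
private lemma cs5_4 : Fin.castSucc (4 : Fin 5) = (4 : Fin 6) := rfl
private lemma cs6_0 : Fin.castSucc (0 : Fin 6) = (0 : Fin 7) := rfl
private lemma cs6_1 : Fin.castSucc (1 : Fin 6) = (1 : Fin 7) := rfl
private lemma cs6_2 : Fin.castSucc (2 : Fin 6) = (2 : Fin 7) := rfl
private lemma cs6_3 : Fin.castSucc (3 : Fin 6) = (3 : Fin 7) := rfl
private lemma cs6_4 : Fin.castSucc (4 : Fin 6) = (4 : Fin 7) := rfl
private lemma cs6_5 : Fin.castSucc (5 : Fin 6) = (5 : Fin 7) := rfl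
private lemma cs7_0 : Fin.castSucc (0 : Fin 7) = (0 : Fin 8) := rfl
private lemma cs7_1 : Fin.castSucc (1 : Fin 7) = (1 : Fin 8) := rfl
private lemma cs7_2 : Fin.castSucc (2 : Fin 7) = (2 : Fin 8) := rfl
private lemma cs7_3 : Fin.castSucc (3 : Fin 7) = (3 : Fin 8) := rfl
private lemma cs7_4 : Fin.castSucc (4 : Fin 7) = (4 : Fin 8) := rfl
private lemma cs7_5 : Fin.castSucc (5 : Fin 7) = (5 : Fin 8) := rfl
private lemma cs7_6 : Fin.castSucc (6 : Fin 7) = (6 : Fin 8) := rfl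

attribute [local simp] Matrix.vecHead Matrix.vecTail

lemma aux_rank_ge (A : Matrix (Fin 8) (Fin 8) ℂ) (f g : Fin 6 → Fin 8)
    (h : (A.submatrix f g).det ≠ 0) : 6 ≤ A.rank := by
  have e1 : ((1 : Matrix (Fin 8) (Fin 8) ℂ).submatrix f (Equiv.refl (Fin 8))) * A
      = A.submatrix f id := by
    simpa using Matrix.one_submatrix_mul f (Equiv.refl (Fin 8)) A
  have e2 : (A.submatrix f id) * ((1 : Matrix (Fin 8) (Fin 8) ℂ).submatrix (Equiv.refl (Fin 8)) g)
      = A.submatrix f g := by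
    simpa using Matrix.mul_submatrix_one (Equiv.refl (Fin 8)) g (A.submatrix f id)
  have hr : (A.submatrix f g).rank = 6 := by
    rw [Matrix.rank_of_isUnit _ ((Matrix.isUnit_iff_isUnit_det _).2 h.isUnit)]
    simp
  calc (6 : ℕ) = (A.submatrix f g).rank := hr.symm
    _ ≤ (A.submatrix f id).rank := by rw [← e2]; exact Matrix.rank_mul_le_left _ _
    _ ≤ A.rank := by rw [← e1]; exact Matrix.rank_mul_le_right _ _

lemma aux_rank_le (A : Matrix (Fin 8) (Fin 8) ℂ) (v w : Fin 8 → ℂ)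
    (hv : A.mulVec v = 0) (hw : A.mulVec w = 0)
    (hind : LinearIndependent ℂ ![v, w]) : A.rank ≤ 6 := by
  have hker : Submodule.span ℂ (Set.range ![v, w]) ≤ LinearMap.ker A.mulVecLin := by
    rw [Submodule.span_le]
    rintro x ⟨i, rfl⟩
    fin_cases i <;> simpa [LinearMap.mem_ker]
  have h2 : 2 ≤ Module.finrank ℂ (LinearMap.ker A.mulVecLin) := by
    have hh := finrank_span_eq_card hind
    simp only [Fintype.card_fin] at hh
    calc 2 = Module.finrank ℂ (Submodule.span ℂ (Set.range ![v, w])) := hh.symm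
      _ ≤ _ := Submodule.finrank_mono hker
  have h3 := LinearMap.finrank_range_add_finrank_ker A.mulVecLin
  simp only [Module.finrank_pi, Fintype.card_fin] at h3
  have h4 : A.rank = Module.finrank ℂ (LinearMap.range A.mulVecLin) := rfl
  omega

lemma subA (a b c : ℂ) :
    (skewA a b c).submatrix ![0,2,3,5,6,7] ![0,2,3,5,6,7] = !![0, 0, a, 0, 0, a;
       0, 0, a, 0, 0, 0;
       -a, -a, 0, 0, 0, 0;
       0, 0, 0, 0, a, b;
       0, 0, 0, -a, 0, c;
       -a, 0, 0, -b, -c, 0] := by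
  ext i j
  fin_cases i <;> fin_cases j <;> simp [skewA, upperPart, fin3_2, fin4_2, fin4_3, fin5_2, fin5_3, fin5_4, fin6_2, fin6_3, fin6_4, fin6_5, fin7_2, fin7_3, fin7_4, fin7_5, fin7_6, fin8_2, fin8_3, fin8_4, fin8_5, fin8_6, fin8_7, cs2_0, cs2_1, cs3_0, cs3_1, cs3_2, cs4_0, cs4_1, cs4_2, cs4_3, cs5_0, cs5_1, cs5_2, cs5_3, cs5_4, cs6_0, cs6_1, cs6_2, cs6_3, cs6_4, cs6_5, cs7_0, cs7_1, cs7_2, cs7_3, cs7_4, cs7_5, cs7_6]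

lemma detA (a b c : ℂ) :
    ((skewA a b c).submatrix ![0,2,3,5,6,7] ![0,2,3,5,6,7]).det = a^6 := by
  rw [subA]
  simp +decide [Matrix.det_succ_row_zero, Fin.sum_univ_succ, Fin.succAbove, cs2_0, cs2_1, cs3_0, cs3_1, cs3_2, cs4_0, cs4_1, cs4_2, cs4_3, cs5_0, cs5_1, cs5_2, cs5_3, cs5_4, cs6_0, cs6_1, cs6_2, cs6_3, cs6_4, cs6_5, cs7_0, cs7_1, cs7_2, cs7_3, cs7_4, cs7_5, cs7_6, ← Fin.succ_castSucc, fin3_2, fin4_2, fin4_3, fin5_2, fin5_3, fin5_4, fin6_2, fin6_3, fin6_4, fin6_5, fin7_2, fin7_3, fin7_4, fin7_5, fin7_6, fin8_2, fin8_3, fin8_4, fin8_5, fin8_6, fin8_7]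
  ring

lemma subB (a b c : ℂ) :
    (skewA a b c).submatrix ![1,2,3,4,5,7] ![1,2,3,4,5,7] = !![0, 0, b, 0, 0, b;
       0, 0, a, b, 0, 0;
       -b, -a, 0, c, 0, 0;
       0, -b, -c, 0, 0, 0;
       0, 0, 0, 0, 0, b;
       -b, 0, 0, 0, -b, 0] := by
  ext i j
  fin_cases i <;> fin_cases j <;> simp [skewA, upperPart, fin3_2, fin4_2, fin4_3, fin5_2, fin5_3, fin5_4, fin6_2, fin6_3, fin6_4, fin6_5, fin7_2, fin7_3, fin7_4, fin7_5, fin7_6, fin8_2, fin8_3, fin8_4, fin8_5, fin8_6, fin8_7, cs2_0, cs2_1, cs3_0, cs3_1, cs3_2, cs4_0, cs4_1, cs4_2, cs4_3, cs5_0, cs5_1, cs5_2, cs5_3, cs5_4, cs6_0, cs6_1, cs6_2, cs6_3, cs6_4, cs6_5, cs7_0, cs7_1, cs7_2, cs7_3, cs7_4, cs7_5, cs7_6]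

lemma detB (a b c : ℂ) :
    ((skewA a b c).submatrix ![1,2,3,4,5,7] ![1,2,3,4,5,7]).det = b^6 := by
  rw [subB]
  simp +decide [Matrix.det_succ_row_zero, Fin.sum_univ_succ, Fin.succAbove, cs2_0, cs2_1, cs3_0, cs3_1, cs3_2, cs4_0, cs4_1, cs4_2, cs4_3, cs5_0, cs5_1, cs5_2, cs5_3, cs5_4, cs6_0, cs6_1, cs6_2, cs6_3, cs6_4, cs6_5, cs7_0, cs7_1, cs7_2, cs7_3, cs7_4, cs7_5, cs7_6, ← Fin.succ_castSucc, fin3_2, fin4_2, fin4_3, fin5_2, fin5_3, fin5_4, fin6_2, fin6_3, fin6_4, fin6_5, fin7_2, fin7_3, fin7_4, fin7_5, fin7_6, fin8_2, fin8_3, fin8_4, fin8_5, fin8_6, fin8_7]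
  ring

lemma subC (a b c : ℂ) :
    (skewA a b c).submatrix ![0,1,3,4,6,7] ![0,1,3,4,6,7] = !![0, c, a, 0, 0, a;
       -c, 0, b, 0, 0, b;
       -a, -b, 0, c, 0, 0;
       0, 0, -c, 0, 0, 0;
       0, 0, 0, 0, 0, c;
       -a, -b, 0, 0, -c, 0] := by
  ext i j
  fin_cases i <;> fin_cases j <;> simp [skewA, upperPart, fin3_2, fin4_2, fin4_3, fin5_2, fin5_3, fin5_4, fin6_2, fin6_3, fin6_4, fin6_5, fin7_2, fin7_3, fin7_4, fin7_5, fin7_6, fin8_2, fin8_3, fin8_4, fin8_5, fin8_6, fin8_7, cs2_0, cs2_1, cs3_0, cs3_1, cs3_2, cs4_0, cs4_1, cs4_2, cs4_3, cs5_0, cs5_1, cs5_2, cs5_3, cs5_4, cs6_0, cs6_1, cs6_2, cs6_3, cs6_4, cs6_5, cs7_0, cs7_1, cs7_2, cs7_3, cs7_4, cs7_5, cs7_6]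

lemma detC (a b c : ℂ) :
    ((skewA a b c).submatrix ![0,1,3,4,6,7] ![0,1,3,4,6,7]).det = c^6 := by
  rw [subC]
  simp +decide [Matrix.det_succ_row_zero, Fin.sum_univ_succ, Fin.succAbove, cs2_0, cs2_1, cs3_0, cs3_1, cs3_2, cs4_0, cs4_1, cs4_2, cs4_3, cs5_0, cs5_1, cs5_2, cs5_3, cs5_4, cs6_0, cs6_1, cs6_2, cs6_3, cs6_4, cs6_5, cs7_0, cs7_1, cs7_2, cs7_3, cs7_4, cs7_5, cs7_6, ← Fin.succ_castSucc, fin3_2, fin4_2, fin4_3, fin5_2, fin5_3, fin5_4, fin6_2, fin6_3, fin6_4, fin6_5, fin7_2, fin7_3, fin7_4, fin7_5, fin7_6, fin8_2, fin8_3, fin8_4, fin8_5, fin8_6, fin8_7]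
  ring

lemma kerv1 (a b c : ℂ) :
    (skewA a b c).mulVec ![0, 0, -(a*c), a*b, -(a^2), -(b*c), b^2, -(a*b)] = 0 := by
  funext i
  fin_cases i <;> (simp [skewA, upperPart, Matrix.mulVec, dotProduct, Fin.sum_univ_succ, fin3_2, fin4_2, fin4_3, fin5_2, fin5_3, fin5_4, fin6_2, fin6_3, fin6_4, fin6_5, fin7_2, fin7_3, fin7_4, fin7_5, fin7_6, fin8_2, fin8_3, fin8_4, fin8_5, fin8_6, fin8_7]; try ring)

lemma kerv2 (a b c : ℂ) :
    (skewA a b c).mulVec ![b^2, -(a*b), -(c^2), b*c, -(a*c), 0, 0, 0] = 0 := by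
  funext i
  fin_cases i <;> (simp [skewA, upperPart, Matrix.mulVec, dotProduct, Fin.sum_univ_succ, fin3_2, fin4_2, fin4_3, fin5_2, fin5_3, fin5_4, fin6_2, fin6_3, fin6_4, fin6_5, fin7_2, fin7_3, fin7_4, fin7_5, fin7_6, fin8_2, fin8_3, fin8_4, fin8_5, fin8_6, fin8_7]; try ring)

lemma kerv3 (a b c : ℂ) :
    (skewA a b c).mulVec ![a*b, -(a^2), 0, 0, 0, c^2, -(b*c), a*c] = 0 := by
  funext i
  fin_cases i <;> (simp [skewA, upperPart, Matrix.mulVec, dotProduct, Fin.sum_univ_succ, fin3_2, fin4_2, fin4_3, fin5_2, fin5_3, fin5_4, fin6_2, fin6_3, fin6_4, fin6_5, fin7_2, fin7_3, fin7_4, fin7_5, fin7_6, fin8_2, fin8_3, fin8_4, fin8_5, fin8_6, fin8_7]; try ring)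

lemma indep_a (a b c : ℂ) (ha : a ≠ 0) :
    LinearIndependent ℂ ![![a*b, -(a^2), 0, 0, 0, c^2, -(b*c), a*c],
      ![0, 0, -(a*c), a*b, -(a^2), -(b*c), b^2, -(a*b)]] := by
  rw [LinearIndependent.pair_iff]
  intro s t hst
  have h1 := congrFun hst 1
  have h4 := congrFun hst 4
  simp [fin3_2, fin4_2, fin4_3, fin5_2, fin5_3, fin5_4, fin6_2, fin6_3, fin6_4, fin6_5, fin7_2, fin7_3, fin7_4, fin7_5, fin7_6, fin8_2, fin8_3, fin8_4, fin8_5, fin8_6, fin8_7] at h1 h4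
  constructor
  · rcases h1 with h | h
    · exact h
    · exact absurd h ha
  · rcases h4 with h | h
    · exact h
    · exact absurd h ha

lemma indep_b (a b c : ℂ) (hb : b ≠ 0) :
    LinearIndependent ℂ ![![b^2, -(a*b), -(c^2), b*c, -(a*c), 0, 0, 0],
      ![0, 0, -(a*c), a*b, -(a^2), -(b*c), b^2, -(a*b)]] := by
  rw [LinearIndependent.pair_iff]
  intro s t hst
  have h0 := congrFun hst 0
  have h6 := congrFun hst 6
  simp [fin3_2, fin4_2, fin4_3, fin5_2, fin5_3, fin5_4, fin6_2, fin6_3, fin6_4, fin6_5, fin7_2, fin7_3, fin7_4, fin7_5, fin7_6, fin8_2, fin8_3, fin8_4, fin8_5, fin8_6, fin8_7] at h0 h6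
  constructor
  · rcases h0 with h | h
    · exact h
    · exact absurd h hb
  · rcases h6 with h | h
    · exact h
    · exact absurd h hb

lemma indep_c (a b c : ℂ) (hc : c ≠ 0) :
    LinearIndependent ℂ ![![b^2, -(a*b), -(c^2), b*c, -(a*c), 0, 0, 0],
      ![a*b, -(a^2), 0, 0, 0, c^2, -(b*c), a*c]] := by
  rw [LinearIndependent.pair_iff]
  intro s t hst
  have h2 := congrFun hst 2
  have h5 := congrFun hst 5
  simp [fin3_2, fin4_2, fin4_3, fin5_2, fin5_3, fin5_4, fin6_2, fin6_3, fin6_4, fin6_5, fin7_2, fin7_3, fin7_4, fin7_5, fin7_6, fin8_2, fin8_3, fin8_4, fin8_5, fin8_6, fin8_7] at h2 h5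
  constructor
  · rcases h2 with h | h
    · exact h
    · exact absurd h hc
  · rcases h5 with h | h
    · exact h
    · exact absurd h hc

lemma rank_skewA (a b c : ℂ) (h : (a, b, c) ≠ (0, 0, 0)) : (skewA a b c).rank = 6 := by
  have h' : ¬(a = 0 ∧ b = 0 ∧ c = 0) := by
    intro ⟨h1, h2, h3⟩; exact h (by rw [h1, h2, h3])
  by_cases ha : a = 0
  · by_cases hb : b = 0
    · have hc : c ≠ 0 := fun hc => h' ⟨ha, hb, hc⟩
      refine le_antisymm (aux_rank_le _ _ _ (kerv2 a b c) (kerv3 a b c) (indep_c a b c hc)) ?_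
      refine aux_rank_ge _ ![0,1,3,4,6,7] ![0,1,3,4,6,7] ?_
      rw [detC]; exact pow_ne_zero _ hc
    · refine le_antisymm (aux_rank_le _ _ _ (kerv2 a b c) (kerv1 a b c) (indep_b a b c hb)) ?_
      refine aux_rank_ge _ ![1,2,3,4,5,7] ![1,2,3,4,5,7] ?_
      rw [detB]; exact pow_ne_zero _ hb
  · refine le_antisymm (aux_rank_le _ _ _ (kerv3 a b c) (kerv1 a b c) (indep_a a b c ha)) ?_
    refine aux_rank_ge _ ![0,2,3,5,6,7] ![0,2,3,5,6,7] ?_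
    rw [detA]; exact pow_ne_zero _ ha

lemma skewA_comb (x y z : ℂ) :
    x • skewA 1 0 0 + y • skewA 0 1 0 + z • skewA 0 0 1 = skewA x y z := by
  ext i j
  fin_cases i <;> fin_cases j <;> (simp [skewA, upperPart, fin3_2, fin4_2, fin4_3, fin5_2, fin5_3, fin5_4, fin6_2, fin6_3, fin6_4, fin6_5, fin7_2, fin7_3, fin7_4, fin7_5, fin7_6, fin8_2, fin8_3, fin8_4, fin8_5, fin8_6, fin8_7]; try ring)

lemma skewA_transpose (a b c : ℂ) : (skewA a b c)ᵀ = -(skewA a b c) := by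
  rw [skewA, transpose_sub, transpose_transpose, neg_sub]

lemma indep3 : LinearIndependent ℂ ![skewA 1 0 0, skewA 0 1 0, skewA 0 0 1] := by
  rw [Fintype.linearIndependent_iff]
  intro g hg
  rw [Fin.sum_univ_three] at hg
  have e03 := congrFun (congrFun hg 0) 3
  have e13 := congrFun (congrFun hg 1) 3
  have e01 := congrFun (congrFun hg 0) 1
  simp [skewA, upperPart, fin3_2, fin4_2, fin4_3, fin5_2, fin5_3, fin5_4, fin6_2, fin6_3, fin6_4, fin6_5, fin7_2, fin7_3, fin7_4, fin7_5, fin7_6, fin8_2, fin8_3, fin8_4, fin8_5, fin8_6, fin8_7] at e03 e13 e01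
  intro i
  fin_cases i <;> simpa

lemma hset : ({skewA 1 0 0, skewA 0 1 0, skewA 0 0 1} : Set (Matrix (Fin 8) (Fin 8) ℂ)) =
    Set.range ![skewA 1 0 0, skewA 0 1 0, skewA 0 0 1] := by
  ext x
  constructor
  · rintro (rfl | rfl | rfl)
    exacts [⟨0, rfl⟩, ⟨1, rfl⟩, ⟨2, rfl⟩]
  · rintro ⟨i, rfl⟩
    fin_cases i
    · exact Or.inl rfl
    · exact Or.inr (Or.inl rfl)
    · exact Or.inr (Or.inr rfl)

/-- The matrix `A(a,b,c)` has rank exactly 6 for `(a,b,c) ≠ (0,0,0)`;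
in particular the span of `A(1,0,0), A(0,1,0), A(0,0,1)` is a 3-dimensional space of
skew-symmetric `8×8` complex matrices of constant rank 6. -/
theorem stmt_18 :
    (∀ a b c : ℂ, (a, b, c) ≠ (0, 0, 0) → (skewA a b c).rank = 6) ∧
    Module.finrank ℂ (Submodule.span ℂ
      ({skewA 1 0 0, skewA 0 1 0, skewA 0 0 1} : Set (Matrix (Fin 8) (Fin 8) ℂ))) = 3 ∧
    (∀ A ∈ Submodule.span ℂ
      ({skewA 1 0 0, skewA 0 1 0, skewA 0 0 1} : Set (Matrix (Fin 8) (Fin 8) ℂ)),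
      Aᵀ = -A) ∧
    (∀ A ∈ Submodule.span ℂ
      ({skewA 1 0 0, skewA 0 1 0, skewA 0 0 1} : Set (Matrix (Fin 8) (Fin 8) ℂ)),
      A ≠ 0 → A.rank = 6) := by
  refine ⟨fun a b c h => rank_skewA a b c h, ?_, ?_, ?_⟩
  · rw [hset, finrank_span_eq_card indep3]
    simp
  · intro A hA
    induction hA using Submodule.span_induction with
    | mem x hx =>
      rcases hx with rfl | rfl | rfl <;> exact skewA_transpose _ _ _
    | zero => simp
    | add x y _ _ hx hy => rw [transpose_add, hx, hy, neg_add]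
    | smul r x _ hx => rw [transpose_smul, hx, smul_neg]
  · intro A hA hAne
    rw [hset] at hA
    obtain ⟨g, hg⟩ := Submodule.mem_span_range_iff_exists_fun ℂ |>.mp hA
    rw [Fin.sum_univ_three] at hg
    simp only [Matrix.cons_val_zero, Matrix.cons_val_one, Matrix.head_cons,
      Matrix.cons_val_two, Matrix.tail_cons] at hg
    rw [skewA_comb] at hg
    subst hg
    apply rank_skewA
    intro hzero
    have h0 : g 0 = 0 := congrArg Prod.fst hzero
    have h1 : g 1 = 0 := congrArg Prod.fst (congrArg Prod.snd hzero)
    have h2 : g 2 = 0 := congrArg Prod.snd (congrArg Prod.snd hzero)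
    apply hAne
    rw [h0, h1, h2, ← skewA_comb]
    simp
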